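/- Let n ≥ 1 and let φ be an automorphism of the free group F = FreeGroup (Fin n). Then there exists g ∈ F with g ≠ 1 and cyclically reduced length ‖g‖ ≤ 2 such that for every h ∈ F with h ≠ 1 one has ‖φ h‖ · ‖g‖ ≤ ‖φ g‖ · ‖h‖. In other words, the supremum defining ‖φ‖_B = sup_{1 ≠ h} ‖φ h‖/‖h‖ is a maximum and is realized by an element of cyclically reduced length at most 2. -/

import Mathlib

/-- The cyclically reduced length of an element of the free group on `Fin n`:
the minimum over all conjugates of the word length (`FreeGroup.norm`). -/
noncomputable def cyclen {n : ℕ} (g : FreeGroup (Fin n)) : ℕ :=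
  sInf { l : ℕ | ∃ x : FreeGroup (Fin n), l = (x * g * x⁻¹).norm }

set_option linter.unusedSectionVars false
namespace Sausage

open FreeGroup List

variable {α : Type*} [DecidableEq α]

/-- letter inverse -/
def invL (a : α × Bool) : α × Bool := (a.1, !a.2)

@[simp] lemma invL_invL (a : α × Bool) : invL (invL a) = a := by
  cases a with | mk x b => simp [invL]

lemma ne_invL_self (a : α × Bool) : a ≠ invL a := by
  cases a with | mk x b => simp [invL]

/-- the non-cancellation relation between adjacent letters -/
def Rl (a b : α × Bool) : Prop := ¬(a.1 = b.1 ∧ a.2 = !b.2)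

lemma Rl_iff {a b : α × Bool} : Rl a b ↔ b ≠ invL a := by
  cases a with | mk x s =>
  cases b with | mk y t =>
  simp only [Rl, invL, ne_eq, Prod.mk.injEq]
  constructor
  · rintro h ⟨rfl, rfl⟩; exact h ⟨rfl, by simp⟩
  · rintro h ⟨rfl, rfl⟩; exact h ⟨rfl, by simp⟩

lemma Rl_self (a : α × Bool) : Rl a a := Rl_iff.2 (ne_invL_self a)

lemma Rl_symm {a b : α × Bool} (h : Rl a b) : Rl b a := by
  rw [Rl_iff] at h ⊢
  intro hh; apply h; rw [hh]; simp

/-- a word is reduced -/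
def Reduced (L : List (α × Bool)) : Prop := List.Chain' Rl L

lemma reduce_eq_self_of_reduced : ∀ {L : List (α × Bool)}, Reduced L → reduce L = L := by
  intro L
  induction L with
  | nil => intro; rfl
  | cons x L ih =>
    intro h
    have hL : Reduced L := h.tail
    rw [reduce.cons, ih hL]
    cases L with
    | nil => rfl
    | cons b T =>
      have hr : Rl x b := (List.isChain_cons_cons.1 h).1
      simp only [Rl] at hr
      dsimp only
      rw [if_neg hr]

lemma reduced_reduce (L : List (α × Bool)) : Reduced (reduce L) := by
  induction L with
  | nil => exact List.isChain_nil
  | cons x L ih =>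
    rw [reduce.cons]
    rcases hr : reduce L with _ | ⟨b, T⟩
    · exact List.isChain_singleton x
    · rw [hr] at ih
      dsimp only
      by_cases h : x.1 = b.1 ∧ x.2 = !b.2
      · rw [if_pos h]; exact ih.tail
      · rw [if_neg h]
        exact List.isChain_cons_cons.2 ⟨h, ih⟩

lemma reduced_toWord (z : FreeGroup α) : Reduced (toWord z) := by
  have := reduced_reduce (toWord z)
  rwa [reduce_toWord] at this

lemma toWord_mk_of_reduced {L : List (α × Bool)} (h : Reduced L) : (mk L).toWord = L := by
  rw [toWord_mk, reduce_eq_self_of_reduced h]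

lemma norm_def (z : FreeGroup α) : norm z = (toWord z).length := rfl

lemma norm_mk_of_reduced {L : List (α × Bool)} (h : Reduced L) : norm (mk L) = L.length := by
  rw [norm_def, toWord_mk_of_reduced h]

/-- the letter generator -/
def lf (a : α × Bool) : FreeGroup α := mk [a]

lemma lf_inv (a : α × Bool) : (lf a)⁻¹ = lf (invL a) := by
  rw [lf, inv_mk]; rfl

lemma norm_lf (a : α × Bool) : norm (lf a) = 1 :=
  norm_mk_of_reduced (List.isChain_singleton a)

lemma mk_cons (a : α × Bool) (L : List (α × Bool)) : mk (a :: L) = lf a * mk L := by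
  rw [lf, mul_mk]; rfl

lemma chain'_replicate_rl (k : ℕ) (a : α × Bool) : Reduced (List.replicate k a) := by
  induction k with
  | zero => exact List.isChain_nil
  | succ k ih =>
    cases k with
    | zero => exact List.isChain_singleton a
    | succ m =>
      rw [List.replicate_succ]
      exact List.isChain_cons_cons.2 ⟨Rl_self a, ih⟩

lemma mk_replicate (k : ℕ) (a : α × Bool) : mk (List.replicate k a) = (lf a) ^ k := by
  induction k with
  | zero => simp [one_eq_mk]
  | succ k ih =>
    rw [List.replicate_succ, mk_cons, ih, pow_succ']

lemma mk_replicate_inv (k : ℕ) (a : α × Bool) :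
    mk (List.replicate k (invL a)) = ((lf a)⁻¹) ^ k := by
  rw [mk_replicate, lf_inv]

/-- norm defect of multiplication is even -/
lemma norm_mul_even (x y : FreeGroup α) : ∃ k, norm x + norm y = norm (x * y) + 2 * k := by
  have h1 : x * y = mk (toWord x ++ toWord y) := by
    rw [← mul_mk, mk_toWord, mk_toWord]
  have h2 : Red (toWord x ++ toWord y) (reduce (toWord x ++ toWord y)) := reduce.red
  obtain ⟨k, hk⟩ := Red.length h2
  refine ⟨k, ?_⟩
  rw [h1, norm_def, norm_def, norm_def, toWord_mk, ← List.length_append, hk]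

lemma norm_conj_even (q z : FreeGroup α) : ∃ k : ℤ,
    (norm (q⁻¹ * z * q) : ℤ) = (norm z : ℤ) + 2 * k := by
  obtain ⟨k₁, hk₁⟩ := norm_mul_even (q⁻¹ * z) q
  obtain ⟨k₂, hk₂⟩ := norm_mul_even q⁻¹ z
  refine ⟨(norm q : ℤ) - k₁ - k₂, ?_⟩
  have e1 : (norm (q⁻¹ * z) : ℤ) + norm q = norm (q⁻¹ * z * q) + 2 * k₁ := by exact_mod_cast hk₁
  have e2 : (norm q⁻¹ : ℤ) + norm z = norm (q⁻¹ * z) + 2 * k₂ := by exact_mod_cast hk₂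
  have e3 : (norm q⁻¹ : ℤ) = norm q := by exact_mod_cast (norm_inv_eq (x := q))
  linarith

/-- the fourth power substitution on words -/
def rep4 : List (α × Bool) → List (α × Bool)
  | [] => []
  | a :: T => a :: a :: a :: a :: rep4 T

@[simp] lemma rep4_nil : rep4 ([] : List (α × Bool)) = [] := rfl

lemma rep4_cons (a : α × Bool) (T : List (α × Bool)) :
    rep4 (a :: T) = List.replicate 4 a ++ rep4 T := rfl

lemma rep4_append (L₁ L₂ : List (α × Bool)) : rep4 (L₁ ++ L₂) = rep4 L₁ ++ rep4 L₂ := by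
  induction L₁ with
  | nil => rfl
  | cons a T ih => simp [rep4_cons, ih]

@[simp] lemma rep4_length (L : List (α × Bool)) : (rep4 L).length = 4 * L.length := by
  induction L with
  | nil => rfl
  | cons a T ih => simp [rep4_cons, ih]; ring

lemma rep4_head? (L : List (α × Bool)) : (rep4 L).head? = L.head? := by
  cases L with
  | nil => rfl
  | cons a T => rfl

lemma getLast?_append_right {β : Type*} (l₁ : List β) {l₂ : List β} (h : l₂ ≠ []) :
    (l₁ ++ l₂).getLast? = l₂.getLast? := by
  rw [← List.head?_reverse, ← List.head?_reverse, List.reverse_append]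
  cases hr : l₂.reverse with
  | nil => exact absurd (by simpa using hr) h
  | cons c R => rfl

lemma rep4_getLast? (L : List (α × Bool)) : (rep4 L).getLast? = L.getLast? := by
  induction L with
  | nil => rfl
  | cons a T ih =>
    cases T with
    | nil => rfl
    | cons b S =>
      rw [rep4_cons, getLast?_append_right _ (by simp [rep4_cons]), ih]
      rw [List.getLast?_cons_cons]

lemma reduced_rep4 {L : List (α × Bool)} (h : Reduced L) : Reduced (rep4 L) := by
  induction L with
  | nil => exact List.isChain_nil
  | cons a T ih =>
    rw [rep4_cons]
    rw [Reduced, List.Chain', List.isChain_append]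
    refine ⟨chain'_replicate_rl 4 a, ih h.tail, ?_⟩
    intro x hx y hy
    have hxa : x = a := by
      have := List.mem_of_mem_getLast? hx
      simpa using (List.eq_of_mem_replicate this)
    rw [rep4_head?] at hy
    cases T with
    | nil => simp at hy
    | cons b S =>
      have hyb : y = b := by
        have : b = y := by simpa using hy
        exact this.symm
      subst hxa hyb
      exact (List.isChain_cons_cons.1 h).1

/-- the subdivision embedding -/
def iot : FreeGroup α →* FreeGroup α := FreeGroup.lift (fun i => of i ^ 4)

lemma iot_lf (a : α × Bool) : iot (lf a) = (lf a) ^ 4 := by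
  cases a with
  | mk i b =>
    cases b
    · have h1 : lf (i, false) = (of i)⁻¹ := by
        rw [show (of i : FreeGroup α) = lf (i, true) from rfl, lf_inv]
        rfl
      rw [h1, _root_.map_inv, inv_pow]
      rw [show iot (of i) = of i ^ 4 from FreeGroup.lift_apply_of]
    · have h1 : lf (i, true) = of i := rfl
      rw [h1]
      exact FreeGroup.lift_apply_of

lemma iot_mk (L : List (α × Bool)) : iot (mk L) = mk (rep4 L) := by
  induction L with
  | nil =>
    rw [← one_eq_mk, _root_.map_one]
    exact one_eq_mk
  | cons a T ih =>
    rw [mk_cons, _root_.map_mul, iot_lf, ih, rep4_cons, ← mul_mk, mk_replicate]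

lemma norm_iot (z : FreeGroup α) : norm (iot z) = 4 * norm z := by
  have h1 : iot z = mk (rep4 (toWord z)) := by rw [← iot_mk, mk_toWord]
  rw [h1, norm_mk_of_reduced (reduced_rep4 (reduced_toWord z)), rep4_length, norm_def]

lemma iot_eq_one {z : FreeGroup α} (h : iot z = 1) : z = 1 := by
  have := norm_iot z
  rw [h, FreeGroup.norm_one] at this
  have : norm z = 0 := by omega
  rwa [FreeGroup.norm_eq_zero] at this

/-- cyclically reduced word -/
def CRW (L : List (α × Bool)) : Prop := Reduced (L ++ L)

lemma CRW_nil : CRW ([] : List (α × Bool)) := by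
  unfold CRW Reduced
  exact List.isChain_nil

lemma CRW.reduced {L : List (α × Bool)} (h : CRW L) : Reduced L :=
  (List.isChain_append.1 h).1

lemma CRW.junction {L : List (α × Bool)} (h : CRW L) :
    ∀ a ∈ L.getLast?, ∀ b ∈ L.head?, Rl a b :=
  (List.isChain_append.1 h).2.2

lemma reduced_flatten_replicate {L : List (α × Bool)} (h : CRW L) (m : ℕ) :
    Reduced (List.flatten (List.replicate m L)) := by
  induction m with
  | zero => exact List.isChain_nil
  | succ m ih =>
    rw [List.replicate_succ, List.flatten_cons]
    rw [Reduced, List.Chain', List.isChain_append]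
    refine ⟨h.reduced, ih, ?_⟩
    intro u hu v hv
    cases m with
    | zero => simp at hv
    | succ m =>
      cases hL : L with
      | nil =>
        rw [hL] at hu; simp at hu
      | cons a T =>
        apply h.junction u (by rwa [hL] at hu ⊢) v
        rw [List.replicate_succ, List.flatten_cons, hL] at hv
        rw [hL]
        simpa using hv

lemma norm_pow_le (z : FreeGroup α) (m : ℕ) : norm (z ^ m) ≤ m * norm z := by
  induction m with
  | zero => simp [FreeGroup.norm_one]
  | succ m ih =>
    rw [pow_succ]
    calc norm (z ^ m * z) ≤ norm (z ^ m) + norm z := norm_mul_le _ _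
    _ ≤ m * norm z + norm z := by omega
    _ = (m + 1) * norm z := by ring

lemma norm_pow_CR {L : List (α × Bool)} (h : CRW L) (m : ℕ) :
    norm (mk L ^ m) = m * L.length := by
  rw [pow_mk, norm_mk_of_reduced (reduced_flatten_replicate h m)]
  induction m with
  | zero => simp
  | succ m ih =>
    rw [List.replicate_succ, List.flatten_cons, List.length_append, ih]
    ring

lemma norm_conj_ge_CR {L : List (α × Bool)} (h : CRW L) (q : FreeGroup α) :
    L.length ≤ norm (q * mk L * q⁻¹) := by
  by_contra hc
  push_neg at hc
  set c := norm (q * mk L * q⁻¹) with hcdef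
  have key : ∀ m : ℕ, m * L.length ≤ 2 * norm q + m * c := by
    intro m
    have e1 : mk L ^ m = q⁻¹ * (q * mk L * q⁻¹) ^ m * q := by
      rw [conj_pow]
      group
    have e2 : norm (mk L ^ m) ≤ norm q⁻¹ + norm ((q * mk L * q⁻¹) ^ m) + norm q := by
      rw [e1]
      calc norm (q⁻¹ * (q * mk L * q⁻¹) ^ m * q)
          ≤ norm (q⁻¹ * (q * mk L * q⁻¹) ^ m) + norm q := norm_mul_le _ _
      _ ≤ norm q⁻¹ + norm ((q * mk L * q⁻¹) ^ m) + norm q := by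
          have := norm_mul_le q⁻¹ ((q * mk L * q⁻¹) ^ m)
          omega
    have e3 := norm_pow_le (q * mk L * q⁻¹) m
    rw [norm_pow_CR h m] at e2
    rw [norm_inv_eq (x := q)] at e2
    linarith
  have h3 : c + 1 ≤ L.length := hc
  set m := 2 * norm q + 1 with hm
  have e := key m
  have hmul : m * (c + 1) ≤ m * L.length := Nat.mul_le_mul_left m h3
  have hexp : m * (c + 1) = m * c + m := by ring
  linarith

end Sausage

namespace Sausage

open FreeGroup List

variable {n : ℕ}

lemma cyclen_le (g q : FreeGroup (Fin n)) : cyclen g ≤ norm (q * g * q⁻¹) :=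
  Nat.sInf_le ⟨q, rfl⟩

lemma cyclen_le_norm (g : FreeGroup (Fin n)) : cyclen g ≤ norm g := by
  have := cyclen_le g 1
  simpa using this

lemma cyclen_set_nonempty (g : FreeGroup (Fin n)) :
    { l : ℕ | ∃ x : FreeGroup (Fin n), l = (x * g * x⁻¹).norm }.Nonempty :=
  ⟨norm g, ⟨1, by simp⟩⟩

lemma exists_cyclen_eq (g : FreeGroup (Fin n)) : ∃ q, cyclen g = norm (q * g * q⁻¹) :=
  Nat.sInf_mem (cyclen_set_nonempty g)

lemma cyclen_conj (y g : FreeGroup (Fin n)) : cyclen (y * g * y⁻¹) = cyclen g := by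
  unfold cyclen
  congr 1
  ext l
  constructor
  · rintro ⟨x, rfl⟩
    exact ⟨x * y, by group⟩
  · rintro ⟨x, rfl⟩
    refine ⟨x * y⁻¹, by group⟩

lemma cyclen_eq_zero {g : FreeGroup (Fin n)} : cyclen g = 0 ↔ g = 1 := by
  constructor
  · intro h
    obtain ⟨q, hq⟩ := exists_cyclen_eq g
    rw [h] at hq
    have : q * g * q⁻¹ = 1 := by rwa [eq_comm, FreeGroup.norm_eq_zero] at hq
    have : g = q⁻¹ * 1 * q := by
      rw [← this]; group
    simpa using this
  · rintro rfl
    have h1 := cyclen_le_norm (1 : FreeGroup (Fin n))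
    rw [FreeGroup.norm_one] at h1
    omega

lemma cyclen_mk_CR {L : List (Fin n × Bool)} (h : CRW L) : cyclen (mk L) = L.length := by
  apply Nat.le_antisymm
  · have := cyclen_le_norm (mk L)
    rwa [norm_mk_of_reduced h.reduced] at this
  · obtain ⟨q, hq⟩ := exists_cyclen_eq (mk L)
    rw [hq]
    exact norm_conj_ge_CR h q

lemma exists_conj_CR_aux : ∀ (N : ℕ) (z : FreeGroup (Fin n)), norm z ≤ N →
    ∃ (q : FreeGroup (Fin n)) (L : List (Fin n × Bool)), CRW L ∧ z = q * mk L * q⁻¹ := by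
  intro N
  induction N with
  | zero =>
    intro z hz
    refine ⟨1, [], CRW_nil, ?_⟩
    · have : z = 1 := by rwa [Nat.le_zero, FreeGroup.norm_eq_zero] at hz
      rw [this, ← one_eq_mk]
      group
  | succ N ih =>
    intro z hz
    by_cases hC : CRW (toWord z)
    · exact ⟨1, toWord z, hC, by rw [mk_toWord]; group⟩
    · rcases hW : toWord z with _ | ⟨a, T⟩
      · exact absurd (show CRW (toWord z) by rw [hW]; exact CRW_nil) hC
      cases hT : T with
      | nil =>
        exfalso
        apply hC
        rw [hW, hT]
        exact List.isChain_cons_cons.2 ⟨Rl_self a, List.isChain_singleton a⟩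
      | cons b S =>
        have hTne : T ≠ [] := by rw [hT]; simp
        -- junction failure gives getLast = invL a
        have hred : Reduced (toWord z) := reduced_toWord z
        have hfail : ¬(∀ u ∈ (toWord z).getLast?, ∀ v ∈ (toWord z).head?, Rl u v) := by
          intro hj
          exact hC (List.isChain_append.2 ⟨hred, hred, hj⟩)
        push_neg at hfail
        obtain ⟨u, hu, v, hv, huv⟩ := hfail
        rw [hW] at hv
        simp only [List.head?_cons, Option.mem_some_iff] at hv
        have hva : v = a := hv.symm
        subst hva
        have huval : u = invL v := by
          rw [Rl_iff] at huv
          push_neg at huv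
          rw [huv]
          simp
        have huT : T.getLast? = some u := by
          rw [hW, hT] at hu
          rw [List.getLast?_cons_cons] at hu
          rw [hT]
          simpa using hu
        obtain ⟨M, hM⟩ : ∃ M, T = M ++ [u] := by
          rcases List.getLast?_eq_some_iff.1 huT with ⟨M, hM⟩
          exact ⟨M, hM⟩
        have hzeq : z = mk (v :: T) := by rw [← hW, mk_toWord]
        have hz2 : z = lf v * mk M * (lf v)⁻¹ := by
          rw [hzeq, mk_cons]
          rw [hM, huval]
          rw [← mul_mk, lf_inv]
          rfl
        have hnorm : norm (mk M) ≤ N := by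
          have h1 : norm (mk M) ≤ M.length := norm_mk_le
          have h2 : (toWord z).length = T.length + 1 := by rw [hW]; simp
          have h3 : T.length = M.length + 1 := by rw [hM]; simp
          have h5 : norm z = (toWord z).length := rfl
          omega
        obtain ⟨q, L, hL, hq⟩ := ih (mk M) hnorm
        refine ⟨lf v * q, L, hL, ?_⟩
        rw [hz2, hq]
        group

lemma exists_conj_CR (z : FreeGroup (Fin n)) :
    ∃ (q : FreeGroup (Fin n)) (L : List (Fin n × Bool)), CRW L ∧ z = q * mk L * q⁻¹ ∧
      cyclen z = L.length := by
  obtain ⟨q, L, hL, hz⟩ := exists_conj_CR_aux (norm z) z le_rfl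
  refine ⟨q, L, hL, hz, ?_⟩
  rw [hz, cyclen_conj, cyclen_mk_CR hL]

lemma CRW_rep4 {L : List (Fin n × Bool)} (h : CRW L) : CRW (rep4 L) := by
  unfold CRW
  rw [← rep4_append]
  exact reduced_rep4 h

lemma cyclen_iot (z : FreeGroup (Fin n)) : cyclen (iot z) = 4 * cyclen z := by
  obtain ⟨q, L, hL, hz, hcy⟩ := exists_conj_CR z
  rw [hcy, hz]
  rw [_root_.map_mul, _root_.map_mul, _root_.map_inv]
  rw [cyclen_conj, iot_mk, cyclen_mk_CR (CRW_rep4 hL), rep4_length]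

end Sausage

namespace Sausage

open FreeGroup List

variable {α : Type*} [DecidableEq α]

lemma reduced_append3 {P Q R : List (α × Bool)} (hP : Reduced P) (hQ : Reduced Q)
    (hR : Reduced R)
    (hPQ : ∀ a ∈ P.getLast?, ∀ b ∈ Q.head?, Rl a b)
    (hQR : ∀ a ∈ Q.getLast?, ∀ b ∈ R.head?, Rl a b)
    (hPR : Q = [] → ∀ a ∈ P.getLast?, ∀ b ∈ R.head?, Rl a b) :
    Reduced (P ++ Q ++ R) := by
  have hPQ' : Reduced (P ++ Q) := List.isChain_append.2 ⟨hP, hQ, hPQ⟩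
  rw [Reduced, List.Chain', List.isChain_append]
  refine ⟨hPQ', hR, ?_⟩
  intro a ha b hb
  cases hQe : Q with
  | nil =>
    subst hQe
    rw [List.append_nil] at ha
    exact hPR rfl a ha b hb
  | cons c S =>
    rw [getLast?_append_right P (by rw [hQe]; simp)] at ha
    exact hQR a ha b hb

lemma head?_replicate_append {k : ℕ} (hk : 1 ≤ k) (a : α × Bool) (R : List (α × Bool)) :
    (List.replicate k a ++ R).head? = some a := by
  cases k with
  | zero => omega
  | succ m => rfl

lemma getLast?_replicate {k : ℕ} (hk : 1 ≤ k) (a : α × Bool) :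
    (List.replicate k a).getLast? = some a := by
  rw [← List.head?_reverse, List.reverse_replicate]
  cases k with
  | zero => omega
  | succ m => rfl

lemma rep4_eq_nil_iff (L : List (α × Bool)) : rep4 L = [] ↔ L = [] := by
  cases L with
  | nil => simp
  | cons a T => simp [rep4_cons]

lemma npow_cancel_left (u : FreeGroup α) {j : ℕ} (hj : j ≤ 4) :
    (u⁻¹) ^ j * u ^ 4 = u ^ (4 - j) := by
  have h4 : u ^ 4 = u ^ j * u ^ (4 - j) := by rw [← pow_add]; congr 1; omega
  rw [h4, inv_pow, inv_mul_cancel_left]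

lemma npow_cancel_right (u : FreeGroup α) {j : ℕ} (hj : j ≤ 4) :
    (u⁻¹) ^ 4 * u ^ j = (u⁻¹) ^ (4 - j) := by
  have h4 : (u⁻¹) ^ 4 = (u⁻¹) ^ (4 - j) * (u⁻¹) ^ j := by rw [← pow_add]; congr 1; omega
  rw [h4, mul_assoc, inv_pow u j, inv_mul_cancel, mul_one]

lemma head?_eq_cons {H : List (α × Bool)} {a : α × Bool} (h : H.head? = some a) :
    ∃ T, H = a :: T := by
  cases H with
  | nil => simp at h
  | cons c T =>
    simp only [List.head?_cons, Option.some.injEq] at h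
    exact ⟨T, by rw [h]⟩

end Sausage

namespace Sausage

open FreeGroup List

variable {α : Type*} [DecidableEq α]

lemma rep4_singleton (a : α × Bool) : rep4 [a] = List.replicate 4 a := rfl

lemma head?_append_left {β : Type*} {l₁ : List β} (l₂ : List β) (h : l₁ ≠ []) :
    (l₁ ++ l₂).head? = l₁.head? := by
  cases l₁ with
  | nil => exact absurd rfl h
  | cons a T => rfl

lemma COH (h : FreeGroup α) (x : α × Bool) :
    ∃ A σ : ℤ,
      (∀ j : ℕ, j ≤ 4 →
        (norm ((lf x)⁻¹ ^ j * iot h * lf x ^ j) : ℤ) = 4 * A + 2 * σ * j) ∧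
      (∀ j : ℕ, 1 ≤ j → j ≤ 3 → h ≠ 1 →
        (toWord ((lf x)⁻¹ ^ j * iot h * lf x ^ j)).head? = some x ∨
        (toWord ((lf x)⁻¹ ^ j * iot h * lf x ^ j)).head? = some (invL x)) := by
  have hhmk : h = mk (toWord h) := (mk_toWord).symm
  set H := toWord h with hH
  have hred : Reduced H := reduced_toWord h
  by_cases hH0 : H = []
  · have h1 : h = 1 := by rw [hhmk, hH0, ← one_eq_mk]
    refine ⟨0, 0, ?_, ?_⟩
    · intro j hj
      have hcnj : (lf x)⁻¹ ^ j * iot h * lf x ^ j = 1 := by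
        rw [h1, _root_.map_one]
        group
      rw [hcnj, FreeGroup.norm_one]
      push_cast
      ring
    · intro j _ _ hne
      exact absurd h1 hne
  by_cases hc1 : H.head? = some x
  · obtain ⟨T, hT⟩ := head?_eq_cons hc1
    by_cases hc2 : H.getLast? = some (invL x)
    · -- case c11
      have hTne : T ≠ [] := by
        rintro rfl
        rw [hT] at hc2
        simp only [List.getLast?_singleton, Option.some.injEq] at hc2
        exact ne_invL_self x hc2
      have hTlast : T.getLast? = some (invL x) := by
        rw [hT, show (x :: T) = [x] ++ T from rfl, getLast?_append_right [x] hTne] at hc2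
        exact hc2
      obtain ⟨M, hM⟩ := List.getLast?_eq_some_iff.1 hTlast
      have hchain : Reduced (x :: (M ++ [invL x])) := by rw [← hM, ← hT]; exact hred
      have hMred : Reduced M := by
        have h2 := (List.isChain_cons.1 hchain).2
        exact (List.isChain_append.1 h2).1
      have hMne : M ≠ [] := by
        rintro rfl
        have h2 := (List.isChain_cons.1 hchain).1 (invL x) (by rfl)
        rw [Rl_iff] at h2
        exact h2 rfl
      have hiot : iot h = lf x ^ 4 * mk (rep4 M) * ((lf x)⁻¹) ^ 4 := by
        rw [hhmk, iot_mk]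
        rw [hT, hM, rep4_cons, rep4_append, rep4_singleton]
        rw [← mul_mk, ← mul_mk, mk_replicate, mk_replicate_inv]
        group
      have key : ∀ j : ℕ, j ≤ 4 →
          (lf x)⁻¹ ^ j * iot h * lf x ^ j
            = mk (List.replicate (4-j) x ++ rep4 M ++ List.replicate (4-j) (invL x)) ∧
          Reduced (List.replicate (4-j) x ++ rep4 M ++ List.replicate (4-j) (invL x)) := by
        intro j hj
        constructor
        · rw [hiot, ← mul_mk, ← mul_mk, mk_replicate, mk_replicate_inv]
          rw [← npow_cancel_left (lf x) hj, ← npow_cancel_right (lf x) hj]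
          group
        · apply reduced_append3 (chain'_replicate_rl _ _) (reduced_rep4 hMred)
            (chain'_replicate_rl _ _)
          · intro a ha b hb
            have hax : a = x := List.eq_of_mem_replicate (List.mem_of_mem_getLast? ha)
            rw [rep4_head?] at hb
            have hb2 : b ∈ (M ++ [invL x]).head? := by
              rwa [head?_append_left [invL x] hMne]
            rw [hax]
            exact (List.isChain_cons.1 hchain).1 b hb2
          · intro a ha b hb
            have hbx : b = invL x := List.eq_of_mem_replicate (List.mem_of_mem_head? hb)
            rw [rep4_getLast?] at ha
            rw [hbx]
            have h2 := (List.isChain_cons.1 hchain).2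
            exact (List.isChain_append.1 h2).2.2 a ha (invL x) rfl
          · intro hQ
            exact absurd ((rep4_eq_nil_iff M).1 hQ) hMne
      have hlen : H.length = M.length + 2 := by rw [hT, hM]; simp
      refine ⟨(H.length : ℤ), -1, ?_, ?_⟩
      · intro j hj
        obtain ⟨hmk, hrd⟩ := key j hj
        rw [hmk, norm_mk_of_reduced hrd]
        have e1 : (List.replicate (4-j) x ++ rep4 M ++ List.replicate (4-j) (invL x)).length
            = (4-j) + 4 * M.length + (4-j) := by
          simp [rep4_length]
          omega
        rw [e1]
        have : (((4-j) + 4 * M.length + (4-j) : ℕ) : ℤ)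
            = (4 - (j:ℤ)) + 4 * M.length + (4 - (j:ℤ)) := by
          push_cast [Nat.cast_sub hj]
          ring
        rw [this, hlen]
        push_cast
        ring
      · intro j hj1 hj3 _
        obtain ⟨hmk, hrd⟩ := key j (by omega)
        left
        rw [hmk, toWord_mk_of_reduced hrd]
        rw [List.append_assoc]
        exact head?_replicate_append (by omega) x _
    · -- case c10
      have hchain : Reduced (x :: T) := by rw [← hT]; exact hred
      have hTred : Reduced T := hchain.tail
      have hiot : iot h = lf x ^ 4 * mk (rep4 T) := by
        rw [hhmk, iot_mk, hT, rep4_cons, ← mul_mk, mk_replicate]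
      have key : ∀ j : ℕ, j ≤ 4 →
          (lf x)⁻¹ ^ j * iot h * lf x ^ j
            = mk (List.replicate (4-j) x ++ rep4 T ++ List.replicate j x) ∧
          Reduced (List.replicate (4-j) x ++ rep4 T ++ List.replicate j x) := by
        intro j hj
        constructor
        · rw [hiot, ← mul_mk, ← mul_mk, mk_replicate, mk_replicate]
          rw [← npow_cancel_left (lf x) hj]
          group
        · apply reduced_append3 (chain'_replicate_rl _ _) (reduced_rep4 hTred)
            (chain'_replicate_rl _ _)
          · intro a ha b hb
            have hax : a = x := List.eq_of_mem_replicate (List.mem_of_mem_getLast? ha)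
            rw [rep4_head?] at hb
            rw [hax]
            exact (List.isChain_cons.1 hchain).1 b hb
          · intro a ha b hb
            have hbx : b = x := List.eq_of_mem_replicate (List.mem_of_mem_head? hb)
            rw [rep4_getLast?] at ha
            have hTne : T ≠ [] := by
              rintro rfl
              simp at ha
            rw [hbx, Rl_iff]
            intro hxe
            apply hc2
            rw [hT, show (x :: T) = [x] ++ T from rfl, getLast?_append_right [x] hTne]
            have : a = invL x := by rw [hxe]; simp
            rw [← this]
            exact ha
          · intro _ a ha b hb
            have hax : a = x := List.eq_of_mem_replicate (List.mem_of_mem_getLast? ha)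
            have hbx : b = x := List.eq_of_mem_replicate (List.mem_of_mem_head? hb)
            rw [hax, hbx]
            exact Rl_self x
      have hlen : H.length = T.length + 1 := by rw [hT]; simp
      refine ⟨(H.length : ℤ), 0, ?_, ?_⟩
      · intro j hj
        obtain ⟨hmk, hrd⟩ := key j hj
        rw [hmk, norm_mk_of_reduced hrd]
        have e1 : (List.replicate (4-j) x ++ rep4 T ++ List.replicate j x).length
            = (4-j) + 4 * T.length + j := by
          simp [rep4_length]
          omega
        rw [e1, hlen]
        have h4j : ((4 - j : ℕ) : ℤ) = 4 - (j : ℤ) := by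
          push_cast [Nat.cast_sub hj]
          ring
        push_cast [h4j]
        ring
      · intro j hj1 hj3 _
        obtain ⟨hmk, hrd⟩ := key j (by omega)
        left
        rw [hmk, toWord_mk_of_reduced hrd]
        rw [List.append_assoc]
        exact head?_replicate_append (by omega) x _
  · by_cases hc2 : H.getLast? = some (invL x)
    · -- case c01
      obtain ⟨I, hI⟩ := List.getLast?_eq_some_iff.1 hc2
      have hchain : Reduced (I ++ [invL x]) := by rw [← hI]; exact hred
      have hIred : Reduced I := (List.isChain_append.1 hchain).1
      have hiot : iot h = mk (rep4 I) * ((lf x)⁻¹) ^ 4 := by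
        rw [hhmk, iot_mk, hI, rep4_append, rep4_singleton, ← mul_mk, mk_replicate_inv]
      have key : ∀ j : ℕ, j ≤ 4 →
          (lf x)⁻¹ ^ j * iot h * lf x ^ j
            = mk (List.replicate j (invL x) ++ rep4 I ++ List.replicate (4-j) (invL x)) ∧
          Reduced (List.replicate j (invL x) ++ rep4 I ++ List.replicate (4-j) (invL x)) := by
        intro j hj
        constructor
        · rw [hiot, ← mul_mk, ← mul_mk, mk_replicate_inv, mk_replicate_inv]
          rw [← npow_cancel_right (lf x) hj]
          group
        · apply reduced_append3 (chain'_replicate_rl _ _) (reduced_rep4 hIred)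
            (chain'_replicate_rl _ _)
          · intro a ha b hb
            have hax : a = invL x := List.eq_of_mem_replicate (List.mem_of_mem_getLast? ha)
            rw [rep4_head?] at hb
            have hIne : I ≠ [] := by
              rintro rfl
              simp at hb
            rw [hax, Rl_iff, invL_invL]
            intro hbe
            apply hc1
            rw [hI, head?_append_left [invL x] hIne, ← hbe]
            exact Option.mem_def.1 hb
          · intro a ha b hb
            have hbx : b = invL x := List.eq_of_mem_replicate (List.mem_of_mem_head? hb)
            rw [rep4_getLast?] at ha
            rw [hbx]
            exact (List.isChain_append.1 hchain).2.2 a ha (invL x) rfl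
          · intro _ a ha b hb
            have hax : a = invL x := List.eq_of_mem_replicate (List.mem_of_mem_getLast? ha)
            have hbx : b = invL x := List.eq_of_mem_replicate (List.mem_of_mem_head? hb)
            rw [hax, hbx]
            exact Rl_self _
      have hlen : H.length = I.length + 1 := by rw [hI]; simp
      refine ⟨(H.length : ℤ), 0, ?_, ?_⟩
      · intro j hj
        obtain ⟨hmk, hrd⟩ := key j hj
        rw [hmk, norm_mk_of_reduced hrd]
        have e1 : (List.replicate j (invL x) ++ rep4 I ++ List.replicate (4-j) (invL x)).length
            = j + 4 * I.length + (4-j) := by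
          simp [rep4_length]
          omega
        rw [e1, hlen]
        have h4j : ((4 - j : ℕ) : ℤ) = 4 - (j : ℤ) := by
          push_cast [Nat.cast_sub hj]
          ring
        push_cast [h4j]
        ring
      · intro j hj1 hj3 _
        obtain ⟨hmk, hrd⟩ := key j (by omega)
        right
        rw [hmk, toWord_mk_of_reduced hrd]
        rw [List.append_assoc]
        exact head?_replicate_append (by omega) (invL x) _
    · -- case c00
      have hiot : iot h = mk (rep4 H) := by rw [hhmk, iot_mk]
      have key : ∀ j : ℕ, j ≤ 4 →
          (lf x)⁻¹ ^ j * iot h * lf x ^ j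
            = mk (List.replicate j (invL x) ++ rep4 H ++ List.replicate j x) ∧
          Reduced (List.replicate j (invL x) ++ rep4 H ++ List.replicate j x) := by
        intro j hj
        constructor
        · rw [hiot, ← mul_mk, ← mul_mk, mk_replicate_inv, mk_replicate]
        · apply reduced_append3 (chain'_replicate_rl _ _) (reduced_rep4 hred)
            (chain'_replicate_rl _ _)
          · intro a ha b hb
            have hax : a = invL x := List.eq_of_mem_replicate (List.mem_of_mem_getLast? ha)
            rw [rep4_head?] at hb
            rw [hax, Rl_iff, invL_invL]
            intro hbe
            apply hc1
            rw [← hbe]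
            exact Option.mem_def.1 hb
          · intro a ha b hb
            have hbx : b = x := List.eq_of_mem_replicate (List.mem_of_mem_head? hb)
            rw [rep4_getLast?] at ha
            rw [hbx, Rl_iff]
            intro hxe
            apply hc2
            have : a = invL x := by rw [hxe]; simp
            rw [← this]
            exact ha
          · intro hQ
            exact absurd ((rep4_eq_nil_iff H).1 hQ) hH0
      refine ⟨(H.length : ℤ), 1, ?_, ?_⟩
      · intro j hj
        obtain ⟨hmk, hrd⟩ := key j hj
        rw [hmk, norm_mk_of_reduced hrd]
        have e1 : (List.replicate j (invL x) ++ rep4 H ++ List.replicate j x).length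
            = j + 4 * H.length + j := by
          simp [rep4_length]
          omega
        rw [e1]
        push_cast
        ring
      · intro j hj1 hj3 _
        obtain ⟨hmk, hrd⟩ := key j (by omega)
        right
        rw [hmk, toWord_mk_of_reduced hrd]
        rw [List.append_assoc]
        exact head?_replicate_append (by omega) (invL x) _

end Sausage

namespace Sausage

open FreeGroup List

variable {α : Type*} [DecidableEq α]

/-- two-sided conjugation bound by a letter -/
lemma norm_conj_letter_le (V s : FreeGroup α) (hs : norm s = 1) :
    norm (s⁻¹ * V * s) ≤ norm V + 2 := by
  calc norm (s⁻¹ * V * s) ≤ norm (s⁻¹ * V) + norm s := norm_mul_le _ _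
  _ ≤ norm s⁻¹ + norm V + norm s := by have := norm_mul_le s⁻¹ V; omega
  _ = norm V + 2 := by rw [norm_inv_eq, hs]; omega

lemma norm_conj_letter_ge (V s : FreeGroup α) (hs : norm s = 1) :
    norm V ≤ norm (s⁻¹ * V * s) + 2 := by
  have h1 : V = s * (s⁻¹ * V * s) * s⁻¹ := by group
  calc norm V = norm (s * (s⁻¹ * V * s) * s⁻¹) := by rw [← h1]
  _ ≤ norm (s * (s⁻¹ * V * s)) + norm s⁻¹ := norm_mul_le _ _
  _ ≤ norm s + norm (s⁻¹ * V * s) + norm s⁻¹ := by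
      have := norm_mul_le s (s⁻¹ * V * s); omega
  _ = norm (s⁻¹ * V * s) + 2 := by rw [norm_inv_eq, hs]; omega

/-- the move lemma: conjugating off a common first/last letter strictly shortens -/
lemma move_le {V : FreeGroup α} {e : α × Bool}
    (h1 : (toWord V).head? = some e) (h2 : (toWord V).getLast? = some (invL e)) :
    norm ((lf e)⁻¹ * V * lf e) + 2 ≤ norm V := by
  obtain ⟨T, hT⟩ := head?_eq_cons h1
  have hTne : T ≠ [] := by
    rintro rfl
    rw [hT] at h2
    simp only [List.getLast?_singleton, Option.some.injEq] at h2
    exact ne_invL_self e h2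
  have hTlast : T.getLast? = some (invL e) := by
    rw [hT, show (e :: T) = [e] ++ T from rfl, getLast?_append_right [e] hTne] at h2
    exact h2
  obtain ⟨M, hM⟩ := List.getLast?_eq_some_iff.1 hTlast
  have hV : V = lf e * mk M * (lf e)⁻¹ := by
    conv_lhs => rw [← mk_toWord (x := V), hT, hM]
    rw [mk_cons, ← mul_mk, lf_inv]
    rfl
  have hconj : (lf e)⁻¹ * V * lf e = mk M := by rw [hV]; group
  have hlen : norm V = M.length + 2 := by
    rw [norm_def, hT, hM]
    simp
  rw [hconj, hlen]
  have := norm_mk_le (L₁ := M)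
  omega

lemma head?_toWord_inv (V : FreeGroup α) :
    (toWord V⁻¹).head? = ((toWord V).getLast?).map invL := by
  rw [toWord_inv, invRev]
  rw [List.head?_reverse]
  rw [List.getLast?_map]
  rfl

end Sausage

namespace Sausage

open FreeGroup List

variable {n : ℕ}

/-- image of a letter under the subdivided automorphism -/
noncomputable def Uu (φ : FreeGroup (Fin n) ≃* FreeGroup (Fin n)) (l : Fin n × Bool) :
    FreeGroup (Fin n) := iot (φ (lf l))

noncomputable def dd (φ : FreeGroup (Fin n) ≃* FreeGroup (Fin n))
    (p : FreeGroup (Fin n)) (l : Fin n × Bool) : ℕ := norm (p⁻¹ * Uu φ l * p)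

noncomputable def Lam (φ : FreeGroup (Fin n) ≃* FreeGroup (Fin n))
    (p : FreeGroup (Fin n)) : ℕ := Finset.univ.sup (dd φ p)

variable (φ : FreeGroup (Fin n) ≃* FreeGroup (Fin n))

lemma dd_le_Lam (p : FreeGroup (Fin n)) (l : Fin n × Bool) : dd φ p l ≤ Lam φ p :=
  Finset.le_sup (Finset.mem_univ l)

lemma Lam_le {p : FreeGroup (Fin n)} {m : ℕ} (h : ∀ l, dd φ p l ≤ m) : Lam φ p ≤ m :=
  Finset.sup_le (fun l _ => h l)

lemma exists_dd_eq_Lam (hn : 1 ≤ n) (p : FreeGroup (Fin n)) :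
    ∃ l, dd φ p l = Lam φ p := by
  have hne : (Finset.univ : Finset (Fin n × Bool)).Nonempty := ⟨(⟨0, hn⟩, true), Finset.mem_univ _⟩
  obtain ⟨l, _, hl⟩ := Finset.exists_mem_eq_sup Finset.univ hne (dd φ p)
  exact ⟨l, hl.symm⟩

lemma Uu_invL (l : Fin n × Bool) : Uu φ (invL l) = (Uu φ l)⁻¹ := by
  rw [Uu, Uu, ← lf_inv, _root_.map_inv, _root_.map_inv]

lemma dd_invL (p : FreeGroup (Fin n)) (l : Fin n × Bool) : dd φ p (invL l) = dd φ p l := by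
  rw [dd, dd, Uu_invL]
  rw [show p⁻¹ * (Uu φ l)⁻¹ * p = (p⁻¹ * Uu φ l * p)⁻¹ by group]
  exact norm_inv_eq

lemma dd_even (p : FreeGroup (Fin n)) (l : Fin n × Bool) :
    ∃ k : ℤ, (dd φ p l : ℤ) = 2 * k := by
  obtain ⟨k, hk⟩ := norm_conj_even p (Uu φ l)
  refine ⟨2 * (norm (φ (lf l)) : ℤ) + k, ?_⟩
  rw [dd, hk, Uu, norm_iot]
  push_cast
  ring

/-- the word-length bound: all of `Λ p` bounds images of all words -/
lemma word_bound (p : FreeGroup (Fin n)) (L : List (Fin n × Bool)) :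
    norm (p⁻¹ * iot (φ (mk L)) * p) ≤ Lam φ p * L.length := by
  induction L with
  | nil =>
    have : p⁻¹ * iot (φ (mk [])) * p = 1 := by
      rw [← one_eq_mk, _root_.map_one, _root_.map_one]
      group
    rw [this, FreeGroup.norm_one]
    exact Nat.zero_le _
  | cons a T ih =>
    have hsplit : p⁻¹ * iot (φ (mk (a :: T))) * p
        = (p⁻¹ * Uu φ a * p) * (p⁻¹ * iot (φ (mk T)) * p) := by
      rw [mk_cons, _root_.map_mul, _root_.map_mul, Uu]
      group
    rw [hsplit]
    refine le_trans (norm_mul_le _ _) ?_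
    have h1 : norm (p⁻¹ * Uu φ a * p) = dd φ p a := rfl
    have h2 := dd_le_Lam φ p a
    have h3 : Lam φ p * (a :: T).length = Lam φ p + Lam φ p * T.length := by
      simp [List.length_cons]
      ring
    rw [h3]
    omega

lemma cyclen_bound (p : FreeGroup (Fin n)) (h : FreeGroup (Fin n)) :
    cyclen (iot (φ h)) ≤ Lam φ p * cyclen h := by
  obtain ⟨q, hq⟩ := exists_cyclen_eq h
  set w := q * h * q⁻¹ with hw
  have hh : h = q⁻¹ * w * q := by rw [hw]; group
  have h1 : iot (φ h) = (iot (φ q))⁻¹ * iot (φ w) * iot (φ q) := by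
    rw [hh]
    simp only [_root_.map_mul, _root_.map_inv]
  have h2 : cyclen (iot (φ h)) = cyclen (iot (φ w)) := by
    rw [h1]
    have := cyclen_conj (iot (φ q))⁻¹ (iot (φ w))
    rw [inv_inv] at this
    exact this
  have h3 : cyclen (iot (φ w)) ≤ norm (p⁻¹ * iot (φ w) * p) := by
    have := cyclen_le (iot (φ w)) p⁻¹
    rwa [inv_inv] at this
  have h4 : norm (p⁻¹ * iot (φ w) * p) ≤ Lam φ p * (toWord w).length := by
    have := word_bound φ p (toWord w)
    rwa [mk_toWord] at this
  have h5 : (toWord w).length = cyclen h := by rw [← norm_def, ← hq]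
  rw [h2, ← h5]
  exact le_trans h3 h4

end Sausage

namespace Sausage

open FreeGroup List

variable {n : ℕ}

lemma main_pair (hn : 1 ≤ n) (φ : FreeGroup (Fin n) ≃* FreeGroup (Fin n)) :
    ∃ (a b : Fin n × Bool) (lam : ℕ), b ≠ invL a ∧ 0 < lam ∧
      2 * cyclen (φ (lf a * lf b)) = lam ∧
      ∀ h : FreeGroup (Fin n), cyclen (iot (φ h)) ≤ lam * cyclen h := by
  classical
  set x₁ : Fin n × Bool := (⟨0, hn⟩, true) with hx₁
  -- the grid optimisation
  set S : Set ℕ := {m | ∃ (g : FreeGroup (Fin n)) (x : Fin n × Bool) (j : ℕ),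
    j ≤ 3 ∧ m = Lam φ (iot g * lf x ^ j)} with hS
  have hSne : S.Nonempty := ⟨Lam φ (iot 1 * lf x₁ ^ 0), 1, x₁, 0, by omega, rfl⟩
  set lam := sInf S with hlam
  obtain ⟨g₀, x₀, j₀, hj₀, hlameq⟩ := Nat.sInf_mem hSne
  set p := iot g₀ * lf x₀ ^ j₀ with hp
  have hmin : ∀ (g : FreeGroup (Fin n)) (x : Fin n × Bool) (j : ℕ), j ≤ 3 →
      lam ≤ Lam φ (iot g * lf x ^ j) := by
    intro g x j hj
    exact Nat.sInf_le ⟨g, x, j, hj, rfl⟩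
  have hLamp : Lam φ p = lam := hlameq.symm
  -- positivity
  have hlampos : 0 < lam := by
    rcases Nat.eq_zero_or_pos lam with h0 | h
    · exfalso
      have hall : ∀ l, dd φ p l = 0 := by
        intro l
        have := dd_le_Lam φ p l
        omega
      have hU : Uu φ x₁ = 1 := by
        have h1 : norm (p⁻¹ * Uu φ x₁ * p) = 0 := hall x₁
        rw [FreeGroup.norm_eq_zero] at h1
        have : Uu φ x₁ = p * 1 * p⁻¹ := by rw [← h1]; group
        simpa using this
      have hφ : φ (lf x₁) = 1 := iot_eq_one hU
      have : lf x₁ = 1 := by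
        have := φ.injective (a₁ := lf x₁) (a₂ := 1) (by rw [hφ, _root_.map_one])
        exact this
      have hn1 : norm (lf x₁) = 1 := norm_lf x₁
      rw [this, FreeGroup.norm_one] at hn1
      omega
    · exact h
  have hlam2 : 2 ≤ lam := by
    obtain ⟨l₀, hl₀⟩ := exists_dd_eq_Lam φ hn p
    obtain ⟨k, hk⟩ := dd_even φ p l₀
    rw [hl₀, hLamp] at hk
    omega
  -- direction data
  set Vp : (Fin n × Bool) → FreeGroup (Fin n) := fun l => p⁻¹ * Uu φ l * p with hVp
  set Dir : (Fin n × Bool) → Option (Fin n × Bool) := fun l => (toWord (Vp l)).head? with hDir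
  have hVinv : ∀ l, Vp (invL l) = (Vp l)⁻¹ := by
    intro l
    rw [hVp]
    simp only
    rw [Uu_invL]
    group
  have hDirinv : ∀ l, Dir (invL l) = ((toWord (Vp l)).getLast?).map invL := by
    intro l
    rw [hDir]
    simp only
    rw [hVinv l, head?_toWord_inv]
  set Ten : (Fin n × Bool) → Prop := fun l => dd φ p l = lam with hTen
  have hVnorm : ∀ l, norm (Vp l) = dd φ p l := fun l => rfl
  -- head of tension words
  have hDirsome : ∀ l, Ten l → ∃ e, Dir l = some e := by
    intro l hl
    rw [hDir]
    simp only
    cases hW : (toWord (Vp l)) with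
    | nil =>
      exfalso
      have : norm (Vp l) = 0 := by rw [norm_def, hW]; rfl
      rw [hVnorm l, hl] at this
      omega
    | cons c T => exact ⟨c, rfl⟩
  by_cases HP : ∃ a b, Ten a ∧ Ten b ∧ b ≠ invL a ∧ Dir (invL a) ≠ Dir b ∧ Dir (invL b) ≠ Dir a
  · obtain ⟨a, b, hta, htb, hne, hd1, hd2⟩ := HP
    set A := toWord (Vp a) with hA
    set B := toWord (Vp b) with hB
    have hAlen : A.length = lam := by rw [hA, ← norm_def, hVnorm, hta]
    have hBlen : B.length = lam := by rw [hB, ← norm_def, hVnorm, htb]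
    have hAne : A ≠ [] := by intro h0; rw [h0] at hAlen; simp at hAlen; omega
    have hBne : B ≠ [] := by intro h0; rw [h0] at hBlen; simp at hBlen; omega
    have hAred : Reduced A := reduced_toWord _
    have hBred : Reduced B := reduced_toWord _
    -- junctions
    have hjAB : ∀ u ∈ A.getLast?, ∀ v ∈ B.head?, Rl u v := by
      intro u hu v hv
      rw [Rl_iff]
      intro hveq
      apply hd1
      rw [hDirinv a, hDir]
      simp only
      rw [← hA, ← hB]
      rw [Option.mem_def.1 hu, Option.mem_def.1 hv, hveq]
      rfl
    have hjBA : ∀ u ∈ B.getLast?, ∀ v ∈ A.head?, Rl u v := by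
      intro u hu v hv
      rw [Rl_iff]
      intro hveq
      apply hd2
      rw [hDirinv b, hDir]
      simp only
      rw [← hA, ← hB]
      rw [Option.mem_def.1 hu, Option.mem_def.1 hv, hveq]
      rfl
    have hABred : Reduced (A ++ B) := List.isChain_append.2 ⟨hAred, hBred, hjAB⟩
    have hCRW : CRW (A ++ B) := by
      unfold CRW
      rw [Reduced, List.Chain', List.isChain_append]
      refine ⟨hABred, hABred, ?_⟩
      intro u hu v hv
      rw [getLast?_append_right A hBne] at hu
      rw [head?_append_left B hAne] at hv
      exact hjBA u hu v hv
    have hVab : Vp a * Vp b = mk (A ++ B) := by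
      rw [← mul_mk, hA, hB, mk_toWord, mk_toWord]
    have hcycAB : cyclen (Vp a * Vp b) = 2 * lam := by
      rw [hVab, cyclen_mk_CR hCRW]
      rw [List.length_append, hAlen, hBlen]
      ring
    -- relate to φ g
    have hrel : Vp a * Vp b = p⁻¹ * iot (φ (lf a * lf b)) * p := by
      rw [hVp]
      simp only
      rw [_root_.map_mul, _root_.map_mul]
      rw [show iot (φ (lf a)) * iot (φ (lf b)) = Uu φ a * Uu φ b from rfl]
      group
    have hcyciot : cyclen (iot (φ (lf a * lf b))) = 2 * lam := by
      rw [← hcycAB, hrel]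
      have := cyclen_conj p⁻¹ (iot (φ (lf a * lf b)))
      rw [inv_inv] at this
      exact this.symm
    have hcycphi : 2 * cyclen (φ (lf a * lf b)) = lam := by
      have h4 := cyclen_iot (φ (lf a * lf b))
      rw [hcyciot] at h4
      omega
    refine ⟨a, b, lam, hne, hlampos, hcycphi, ?_⟩
    intro h
    have := cyclen_bound φ p h
    rwa [hLamp] at this
  · -- no legal pair: derive a contradiction with minimality
    exfalso
    push_neg at HP
    have hE : ∀ l, Ten l → Dir (invL l) = Dir l := by
      intro l hl
      by_contra hne
      exact hne (HP l l hl hl (ne_invL_self l) hne)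
    obtain ⟨a₀, ha₀⟩ := exists_dd_eq_Lam φ hn p
    have hta₀ : Ten a₀ := by rw [hTen]; simp only; rw [ha₀, hLamp]
    have hCom : ∀ l l', Ten l → Ten l' → Dir l = Dir l' := by
      intro l l' hl hl'
      by_cases hll' : l' = invL l
      · rw [hll', hE l hl]
      · by_cases hd : Dir (invL l) = Dir l'
        · rw [← hd, hE l hl]
        · have h2 := HP l l' hl hl' hll' hd
          rw [← hE l' hl', h2]
    obtain ⟨e, he⟩ := hDirsome a₀ hta₀
    have hDirT : ∀ l, Ten l → Dir l = some e := fun l hl => (hCom l a₀ hl hta₀).trans he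
    have hHeadT : ∀ l, Ten l → (toWord (Vp l)).head? = some e := by
      intro l hl
      have h1 := hDirT l hl
      rw [hDir] at h1
      exact h1
    have hLastT : ∀ l, Ten l → (toWord (Vp l)).getLast? = some (invL e) := by
      intro l hl
      have h1 : Dir (invL l) = some e := by rw [hE l hl]; exact hDirT l hl
      rw [hDirinv l] at h1
      cases hW : (toWord (Vp l)).getLast? with
      | none => rw [hW] at h1; simp at h1
      | some u =>
        rw [hW] at h1
        have h2 : invL u = e := by simpa using h1
        have h3 : u = invL e := by rw [← h2, invL_invL]
        rw [h3]
    have hddq : ∀ l, dd φ (p * lf e) l = norm ((lf e)⁻¹ * Vp l * lf e) := by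
      intro l
      rw [dd, hVp]
      simp only
      congr 1
      group
    have hmove : ∀ l, Ten l → dd φ (p * lf e) l + 2 ≤ lam := by
      intro l hl
      rw [hddq l]
      have h1 := move_le (hHeadT l hl) (hLastT l hl)
      have h2 : norm (Vp l) = lam := hl
      omega
    have hup : ∀ l, dd φ (p * lf e) l ≤ dd φ p l + 2 := by
      intro l
      rw [hddq l]
      exact norm_conj_letter_le (Vp l) (lf e) (norm_lf e)
    have hdown : ∀ l, dd φ p l ≤ dd φ (p * lf e) l + 2 := by
      intro l
      rw [hddq l]
      exact norm_conj_letter_ge (Vp l) (lf e) (norm_lf e)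
    have hlamEven : ∃ k : ℤ, (lam : ℤ) = 2 * k := by
      obtain ⟨k, hk⟩ := dd_even φ p a₀
      have h2 : dd φ p a₀ = lam := hta₀
      rw [h2] at hk
      exact ⟨k, hk⟩
    -- non-tension letters are at distance at least 2 below lam
    have hnt : ∀ l, ¬ Ten l → dd φ p l + 2 ≤ lam := by
      intro l hl
      have h1 : dd φ p l ≤ lam := by
        have := dd_le_Lam φ p l
        omega
      have h2 : dd φ p l ≠ lam := hl
      obtain ⟨k, hk⟩ := dd_even φ p l
      obtain ⟨kl, hkl⟩ := hlamEven
      omega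
    rcases Nat.eq_zero_or_pos j₀ with hj0 | hj0
    · -- vertex case
      have hpg : p = iot g₀ := by rw [hp, hj0, pow_zero, mul_one]
      have hmod : ∀ l, ∃ m, dd φ p l = 4 * m := by
        intro l
        refine ⟨norm (g₀⁻¹ * φ (lf l) * g₀), ?_⟩
        rw [dd, hpg, Uu]
        have h1 : (iot g₀)⁻¹ * iot (φ (lf l)) * iot g₀ = iot (g₀⁻¹ * φ (lf l) * g₀) := by
          simp only [_root_.map_mul, _root_.map_inv]
        rw [h1, norm_iot]
      have hbound : Lam φ (p * lf e) ≤ lam - 2 := by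
        apply Lam_le
        intro l
        by_cases hl : Ten l
        · have := hmove l hl
          omega
        · have h1 := hnt l hl
          have h2 := hup l
          obtain ⟨m, hm⟩ := hmod l
          obtain ⟨m₀, hm₀⟩ : ∃ m, lam = 4 * m := by
            have := hmod a₀
            rw [show dd φ p a₀ = lam from hta₀] at this
            exact this
          omega
      have hq1 : iot g₀ * lf e ^ 1 = p * lf e := by rw [pow_one, hpg]
      have := hmin g₀ e 1 (by omega)
      rw [hq1] at this
      omega
    · -- interior case
      have hVshape : ∀ (l : Fin n × Bool) (j : ℕ),
          (iot g₀ * lf x₀ ^ j)⁻¹ * Uu φ l * (iot g₀ * lf x₀ ^ j)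
            = (lf x₀)⁻¹ ^ j * iot (g₀⁻¹ * φ (lf l) * g₀) * lf x₀ ^ j := by
        intro l j
        rw [Uu]
        have h1 : iot (g₀⁻¹ * φ (lf l) * g₀) = (iot g₀)⁻¹ * iot (φ (lf l)) * iot g₀ := by
          simp only [_root_.map_mul, _root_.map_inv]
        rw [h1, mul_inv_rev, inv_pow]
        group
      have hVpshape : ∀ l, Vp l = (lf x₀)⁻¹ ^ j₀ * iot (g₀⁻¹ * φ (lf l) * g₀) * lf x₀ ^ j₀ := by
        intro l
        rw [hVp]
        simp only
        rw [hp]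
        exact hVshape l j₀
      -- tension words are nontrivial
      have hnt1 : ∀ l, Ten l → g₀⁻¹ * φ (lf l) * g₀ ≠ 1 := by
        intro l hl h0
        have h1 : Vp l = 1 := by
          rw [hVpshape l, h0, _root_.map_one]
          group
        have h2 : norm (Vp l) = lam := hl
        rw [h1, FreeGroup.norm_one] at h2
        omega
      -- the common direction is along the edge
      have hex : e = x₀ ∨ e = invL x₀ := by
        obtain ⟨A, σ, _, hHead⟩ := COH (g₀⁻¹ * φ (lf a₀) * g₀) x₀
        have h1 := hHead j₀ hj0 hj₀ (hnt1 a₀ hta₀)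
        rw [← hVpshape a₀] at h1
        have h2 := hHeadT a₀ hta₀
        rcases h1 with h1 | h1
        · left; rw [h2] at h1; simpa using h1
        · right; rw [h2] at h1; simpa using h1
      -- uniform contradiction machinery
      have hbound2 : ∀ (j' : ℕ), j' ≤ 4 → (iot g₀ * lf x₀ ^ j' = p * lf e) →
          Lam φ (p * lf e) ≤ lam - 2 := by
        intro j' hj' hqe
        apply Lam_le
        intro l
        by_cases hl : Ten l
        · have := hmove l hl
          omega
        · by_contra hc
          push_neg at hc
          have h1 := hnt l hl
          have h2 := hup l
          obtain ⟨kq, hkq⟩ := dd_even φ (p * lf e) l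
          obtain ⟨kl, hkl⟩ := hlamEven
          -- dd q l = lam and dd p l = lam - 2
          have hql : dd φ (p * lf e) l = lam := by omega
          have hpl : dd φ p l = lam - 2 := by
            have := hdown l
            obtain ⟨kp, hkp⟩ := dd_even φ p l
            omega
          -- set up the COH equations
          obtain ⟨A, σ, hF, _⟩ := COH (g₀⁻¹ * φ (lf l) * g₀) x₀
          obtain ⟨At, τ, hG, _⟩ := COH (g₀⁻¹ * φ (lf a₀) * g₀) x₀
          have hdd_j : ∀ (l' : Fin n × Bool) (j : ℕ),
              dd φ (iot g₀ * lf x₀ ^ j) l'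
                = norm ((lf x₀)⁻¹ ^ j * iot (g₀⁻¹ * φ (lf l') * g₀) * lf x₀ ^ j) := by
            intro l' j
            rw [dd, hVshape l' j]
          have hFp := hF j₀ (by omega)
          have hFq := hF j' (by omega)
          have hGp := hG j₀ (by omega)
          have hGq := hG j' (by omega)
          rw [← hdd_j l j₀] at hFp
          rw [← hdd_j l j'] at hFq
          rw [← hdd_j a₀ j₀] at hGp
          rw [← hdd_j a₀ j'] at hGq
          rw [← hp] at hFp hGp
          rw [hqe] at hFq hGq
          -- numeric values
          have hGpv : dd φ p a₀ = lam := hta₀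
          have hGqv : dd φ (p * lf e) a₀ = lam - 2 := by
            have hm := hmove a₀ hta₀
            have hd := hdown a₀
            rw [hGpv] at hd
            omega
          rw [hpl] at hFp
          rw [hql] at hFq
          rw [hGpv] at hGp
          rw [hGqv] at hGq
          have hc2 : ((lam - 2 : ℕ) : ℤ) = (lam : ℤ) - 2 := Nat.cast_sub hlam2
          rw [hc2] at hFp hGq
          -- linear algebra on the four equations
          set d : ℤ := (j' : ℤ) - (j₀ : ℤ) with hd
          have h5 : 2 * (σ * d) = 2 := by linear_combination hFp - hFq
          have h6 : 2 * (τ * d) = -2 := by linear_combination hGp - hGq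
          have h5' : σ * d = 1 := by linarith
          have h6' : τ * d = -1 := by linarith
          have hd0 : d ≠ 0 := by
            intro h0
            rw [h0, mul_zero] at h5'
            omega
          have h7 : σ + τ = 0 := by
            have h8 : (σ + τ) * d = 0 := by linear_combination h5' + h6'
            rcases mul_eq_zero.1 h8 with h | h
            · exact h
            · exact absurd h hd0
          have h8 : (2 : ℤ) = 4 * (At - A) + 2 * (j₀ : ℤ) * (τ - σ) := by
            linear_combination hGp - hFp
          have h10 : (2 : ℤ) = 4 * (At - A - (j₀ : ℤ) * σ) := by
            linear_combination h8 + 2 * (j₀ : ℤ) * h7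
          set K : ℤ := At - A - (j₀ : ℤ) * σ with hK
          omega
      rcases hex with he1 | he1
      · -- e = x₀ : move outward
        rcases Nat.lt_or_ge j₀ 3 with h3 | h3
        · have hqe : iot g₀ * lf x₀ ^ (j₀ + 1) = p * lf e := by
            rw [hp, he1, pow_succ]
            exact (mul_assoc _ _ _).symm
          have hb := hbound2 (j₀ + 1) (by omega) hqe
          have hm := hmin g₀ x₀ (j₀ + 1) (by omega)
          rw [hqe] at hm
          omega
        · have hj3 : j₀ = 3 := by omega
          have hqe : iot g₀ * lf x₀ ^ 4 = p * lf e := by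
            rw [hp, he1, hj3]
            rw [show (4 : ℕ) = 3 + 1 from rfl, pow_succ, ← mul_assoc]
          have hb := hbound2 4 (by omega) hqe
          have hgrid : iot (g₀ * lf x₀) * lf x₀ ^ 0 = p * lf e := by
            rw [pow_zero, mul_one, _root_.map_mul, iot_lf]
            exact hqe
          have hm := hmin (g₀ * lf x₀) x₀ 0 (by omega)
          rw [hgrid] at hm
          omega
      · -- e = invL x₀ : move inward
        have hqe : iot g₀ * lf x₀ ^ (j₀ - 1) = p * lf e := by
          rw [hp, he1]
          have h1 : lf (invL x₀) = (lf x₀)⁻¹ := (lf_inv x₀).symm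
          rw [h1]
          have h2 : j₀ - 1 + 1 = j₀ := by omega
          rw [show lf x₀ ^ j₀ = lf x₀ ^ (j₀ - 1) * lf x₀ by rw [← pow_succ, h2]]
          group
        have hb := hbound2 (j₀ - 1) (by omega) hqe
        have hm := hmin g₀ x₀ (j₀ - 1) (by omega)
        rw [hqe] at hm
        omega

end Sausage

namespace Sausage

open FreeGroup List

variable {n : ℕ}

lemma cyclen_pair (a b : Fin n × Bool) (hne : b ≠ invL a) :
    cyclen (lf a * lf b) = 2 := by
  have hmk : lf a * lf b = mk [a, b] := by
    rw [lf, lf, mul_mk]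
    rfl
  have hrab : Rl a b := Rl_iff.2 hne
  have hrba : Rl b a := Rl_symm hrab
  have hCRW : CRW [a, b] := by
    unfold CRW Reduced
    refine List.isChain_cons_cons.2 ⟨hrab, List.isChain_cons_cons.2 ⟨hrba, List.isChain_cons_cons.2
      ⟨hrab, List.isChain_singleton b⟩⟩⟩
  rw [hmk, cyclen_mk_CR hCRW]
  rfl

end Sausage

/-- The supremum defining `‖φ‖_B = sup_{1 ≠ h} ‖φ h‖/‖h‖` (cyclically reduced
lengths w.r.t. the standard basis) is a maximum, realized by an element of
cyclically reduced length at most `2`. -/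
theorem automorphism_norm_realized_by_short_element
    (n : ℕ) (hn : 1 ≤ n) (φ : FreeGroup (Fin n) ≃* FreeGroup (Fin n)) :
    ∃ g : FreeGroup (Fin n), g ≠ 1 ∧ cyclen g ≤ 2 ∧
      ∀ h : FreeGroup (Fin n), h ≠ 1 →
        cyclen (φ h) * cyclen g ≤ cyclen (φ g) * cyclen h := by
  obtain ⟨a, b, lam, hne, hpos, hphi, hbd⟩ := Sausage.main_pair hn φ
  set g := Sausage.lf a * Sausage.lf b with hg
  have hcg : cyclen g = 2 := Sausage.cyclen_pair a b hne
  refine ⟨g, ?_, ?_, ?_⟩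
  · intro h1
    rw [h1] at hcg
    rw [show cyclen (1 : FreeGroup (Fin n)) = 0 from Sausage.cyclen_eq_zero.2 rfl] at hcg
    omega
  · omega
  · intro h hh
    have h1 : cyclen (Sausage.iot (φ h)) = 4 * cyclen (φ h) := Sausage.cyclen_iot (φ h)
    have h2 := hbd h
    rw [h1] at h2
    have h3 : lam = 2 * cyclen (φ g) := hphi.symm
    rw [h3] at h2
    -- h2 : 4 * cyclen (φ h) ≤ 2 * cyclen (φ g) * cyclen h
    rw [hcg]
    have h4 : 2 * (cyclen (φ h) * 2) ≤ 2 * (cyclen (φ g) * cyclen h) := by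
      calc 2 * (cyclen (φ h) * 2) = 4 * cyclen (φ h) := by ring
      _ ≤ 2 * cyclen (φ g) * cyclen h := h2
      _ = 2 * (cyclen (φ g) * cyclen h) := by ring
    omega
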